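/- Let P be a finite set with n elements and L a linear space on P with m = n lines. Suppose no point lies on n − 1 lines and P is not the union of two intersecting lines. Then every two lines of L intersect. -/

import Mathlib

lemma line_inj {α : Type*} [DecidableEq α] {P : Finset α} {L : Finset (Finset α)}
    (hsub : ∀ l ∈ L, l ⊆ P)
    (hpair : ∀ x ∈ P, ∀ y ∈ P, x ≠ y → ∃! l, l ∈ L ∧ x ∈ l ∧ y ∈ l)
    {a : α} (ha : a ∈ P) {l : Finset α} (hl : l ∈ L) (hal : a ∉ l) :
    l.card ≤ (L.filter fun m => a ∈ m ∧ (m ∩ l).Nonempty).card := by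
  classical
  apply Finset.card_le_card_of_injOn
    (fun b => if h : b ∈ l then (hpair a ha b (hsub l hl h) (fun e => hal (e ▸ h))).choose else ∅)
  · intro b hb
    simp only [dif_pos (Finset.mem_coe.1 hb)]
    have hs := (hpair a ha b (hsub l hl hb) (fun e => hal (e ▸ hb))).choose_spec.1
    exact Finset.mem_filter.2 ⟨hs.1, hs.2.1, ⟨b, Finset.mem_inter.2 ⟨hs.2.2, hb⟩⟩⟩
  · intro b hb b' hb' heq
    by_contra hne
    simp only [Finset.mem_coe] at hb hb'
    simp only [dif_pos hb, dif_pos hb'] at heq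
    have hs := (hpair a ha b (hsub l hl hb) (fun e => hal (e ▸ hb))).choose_spec.1
    have hs' := (hpair a ha b' (hsub l hl hb') (fun e => hal (e ▸ hb'))).choose_spec.1
    set m := (hpair a ha b (hsub l hl hb) (fun e => hal (e ▸ hb))).choose with hm
    have hbne : b ≠ b' := hne
    have hu := hpair b (hsub l hl hb) b' (hsub l hl hb') hbne
    have h1 : m = l := hu.unique ⟨hs.1, hs.2.2, heq ▸ hs'.2.2⟩ ⟨hl, hb, hb'⟩
    exact hal (h1 ▸ hs.2.1)

lemma deg_upper {α : Type*} [DecidableEq α] {P : Finset α} {L : Finset (Finset α)}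
    (hsub : ∀ l ∈ L, l ⊆ P)
    (hcard : ∀ l ∈ L, 2 ≤ l.card)
    (hpair : ∀ x ∈ P, ∀ y ∈ P, x ≠ y → ∃! l, l ∈ L ∧ x ∈ l ∧ y ∈ l)
    {a : α} (ha : a ∈ P) :
    (L.filter fun m => a ∈ m).card + 1 ≤ P.card := by
  classical
  have h1 : (L.filter fun m => a ∈ m).card ≤ (P.erase a).card := by
    apply Finset.card_le_card_of_injOn
      (fun m => if h : (m.erase a).Nonempty then h.choose else a)
    · intro m hm
      replace hm := Finset.mem_filter.1 hm
      have hne : (m.erase a).Nonempty := by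
        rw [← Finset.card_pos, Finset.card_erase_of_mem hm.2]
        have := hcard m hm.1; omega
      simp only [dif_pos hne]
      exact Finset.erase_subset_erase a (hsub m hm.1) hne.choose_spec
    · intro m hm m' hm' heq
      simp only [Finset.coe_filter, Set.mem_setOf_eq] at hm hm'
      have hne : (m.erase a).Nonempty := by
        rw [← Finset.card_pos, Finset.card_erase_of_mem hm.2]
        have := hcard m hm.1; omega
      have hne' : (m'.erase a).Nonempty := by
        rw [← Finset.card_pos, Finset.card_erase_of_mem hm'.2]
        have := hcard m' hm'.1; omega
      simp only [dif_pos hne, dif_pos hne'] at heq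
      have hb := hne.choose_spec
      have hb' := hne'.choose_spec
      rw [Finset.mem_erase] at hb hb'
      have hbP : hne.choose ∈ P := hsub m hm.1 hb.2
      have hu := hpair a ha hne.choose hbP (Ne.symm hb.1)
      exact hu.unique ⟨hm.1, hm.2, hb.2⟩ ⟨hm'.1, hm'.2, heq ▸ hb'.2⟩
  rw [Finset.card_erase_of_mem ha] at h1
  have : 1 ≤ P.card := Finset.card_pos.2 ⟨a, ha⟩
  omega

theorem every_two_lines_intersect_case_III {α : Type*} [DecidableEq α] (P : Finset α) (L : Finset (Finset α))
    (hsub : ∀ l ∈ L, l ⊆ P)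
    (hproper : ∀ l ∈ L, l ≠ P)
    (hcard : ∀ l ∈ L, 2 ≤ l.card)
    (hpair : ∀ x ∈ P, ∀ y ∈ P, x ≠ y → ∃! l, l ∈ L ∧ x ∈ l ∧ y ∈ l)
    (hm : L.card = P.card)
    (hnopoint : ¬ ∃ a ∈ P, (L.filter (fun l => a ∈ l)).card = P.card - 1)
    (hnocover : ¬ ∃ l ∈ L, ∃ l' ∈ L, l ≠ l' ∧ (l ∩ l').Nonempty ∧ P = l ∪ l') :
    ∀ l ∈ L, ∀ l' ∈ L, (l ∩ l').Nonempty := by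
  classical
  intro l1 hl1 l2 hl2
  by_contra hdis
  rw [Finset.not_nonempty_iff_eq_empty] at hdis
  set n := P.card with hn
  set K : α → ℕ := fun a => (L.filter fun m => a ∈ m).card with hK
  -- basic bounds
  have hKlt : ∀ a ∈ P, K a + 1 ≤ n := fun a ha => deg_upper hsub hcard hpair ha
  have hllt : ∀ l ∈ L, l.card + 1 ≤ n := by
    intro l hl
    have : l ⊂ P := HasSubset.Subset.ssubset_of_ne (hsub l hl) (hproper l hl)
    have := Finset.card_lt_card this
    omega
  have hKge : ∀ a ∈ P, ∀ l ∈ L, a ∉ l → l.card ≤ K a := by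
    intro a ha l hl hal
    refine le_trans (line_inj hsub hpair ha hl hal) (Finset.card_le_card ?_)
    intro m hm
    simp only [Finset.mem_filter] at hm ⊢
    exact ⟨hm.1, hm.2.1⟩
  -- counting complements
  have h1 : ∀ a, (L.filter fun m => a ∉ m).card = n - K a := by
    intro a
    have h : K a + (L.filter fun m => a ∉ m).card = L.card := by
      simpa using Finset.card_filter_add_card_filter_not (s := L) (p := fun m => a ∈ m)
    omega
  have h2 : ∀ l ∈ L, (P.filter fun a => a ∉ l).card = n - l.card := by
    intro l hl
    have hfil : P.filter (fun a => a ∈ l) = l := by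
      rw [Finset.filter_mem_eq_inter, Finset.inter_eq_right.2 (hsub l hl)]
    have := Finset.card_filter_add_card_filter_not (s := P) (p := fun a => a ∈ l)
    rw [hfil] at this
    omega
  -- nonzero denominators
  have hn0 : (0:ℚ) < (n:ℚ) := by
    have := hKlt _ (hsub l1 hl1 (Finset.card_pos.1 (by have := hcard l1 hl1; omega)).choose_spec)
    exact_mod_cast Nat.pos_of_ne_zero (by omega)
  -- the two sums
  have keyA : ∑ a ∈ P, ∑ _l ∈ L.filter (fun m => a ∉ m), (1:ℚ)/((n:ℚ) * ((n:ℚ) - (K a : ℚ))) = 1 := by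
    have step : ∀ a ∈ P, ∑ _l ∈ L.filter (fun m => a ∉ m), (1:ℚ)/((n:ℚ) * ((n:ℚ) - (K a : ℚ))) = 1/(n:ℚ) := by
      intro a ha
      rw [Finset.sum_const, h1 a, nsmul_eq_mul]
      have hK' := hKlt a ha
      have hc : ((n - K a : ℕ) : ℚ) = (n:ℚ) - (K a : ℚ) := by
        push_cast [Nat.cast_sub (by omega : K a ≤ n)]; ring
      rw [hc]
      have hd : (n:ℚ) - (K a : ℚ) ≠ 0 := by
        have : (K a : ℚ) + 1 ≤ (n:ℚ) := by exact_mod_cast hK'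
        nlinarith
      field_simp
    rw [Finset.sum_congr rfl step, Finset.sum_const, nsmul_eq_mul]
    field_simp
    rfl
  have keyB : ∑ a ∈ P, ∑ l ∈ L.filter (fun m => a ∉ m), (1:ℚ)/((n:ℚ) * ((n:ℚ) - (l.card : ℚ))) = 1 := by
    have swap : ∑ a ∈ P, ∑ l ∈ L.filter (fun m => a ∉ m), (1:ℚ)/((n:ℚ) * ((n:ℚ) - (l.card : ℚ)))
        = ∑ l ∈ L, ∑ _a ∈ P.filter (fun a => a ∉ l), (1:ℚ)/((n:ℚ) * ((n:ℚ) - (l.card : ℚ))) := by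
      simp only [Finset.sum_filter]
      exact Finset.sum_comm
    rw [swap]
    have step : ∀ l ∈ L, ∑ _a ∈ P.filter (fun a => a ∉ l), (1:ℚ)/((n:ℚ) * ((n:ℚ) - (l.card : ℚ))) = 1/(n:ℚ) := by
      intro l hl
      rw [Finset.sum_const, h2 l hl, nsmul_eq_mul]
      have hl' := hllt l hl
      have hc : ((n - l.card : ℕ) : ℚ) = (n:ℚ) - (l.card : ℚ) := by
        push_cast [Nat.cast_sub (by omega : l.card ≤ n)]; ring
      rw [hc]
      have hd : (n:ℚ) - (l.card : ℚ) ≠ 0 := by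
        have : (l.card : ℚ) + 1 ≤ (n:ℚ) := by exact_mod_cast hl'
        nlinarith
      field_simp
    rw [Finset.sum_congr rfl step, Finset.sum_const, nsmul_eq_mul, hm]
    field_simp
  -- termwise: each A-term ≥ B-term, sums equal, so terms equal
  have hterm : ∀ a ∈ P, ∀ l ∈ L.filter (fun m => a ∉ m),
      (1:ℚ)/((n:ℚ) * ((n:ℚ) - (l.card : ℚ))) ≤ (1:ℚ)/((n:ℚ) * ((n:ℚ) - (K a : ℚ))) := by
    intro a ha l hl
    simp only [Finset.mem_filter] at hl
    have hge := hKge a ha l hl.1 hl.2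
    have hK' := hKlt a ha
    have h0 : (0:ℚ) < (n:ℚ) * ((n:ℚ) - (K a : ℚ)) := by
      have : (K a : ℚ) + 1 ≤ (n:ℚ) := by exact_mod_cast hK'
      nlinarith
    apply one_div_le_one_div_of_le h0
    have : (l.card : ℚ) ≤ (K a : ℚ) := by exact_mod_cast hge
    nlinarith
  have hzero : ∀ a ∈ P, ∀ l ∈ L.filter (fun m => a ∉ m),
      (1:ℚ)/((n:ℚ) * ((n:ℚ) - (K a : ℚ))) - (1:ℚ)/((n:ℚ) * ((n:ℚ) - (l.card : ℚ))) = 0 := by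
    have hsum : ∑ a ∈ P, ∑ l ∈ L.filter (fun m => a ∉ m),
        ((1:ℚ)/((n:ℚ) * ((n:ℚ) - (K a : ℚ))) - (1:ℚ)/((n:ℚ) * ((n:ℚ) - (l.card : ℚ)))) = 0 := by
      simp only [Finset.sum_sub_distrib]
      rw [keyA, keyB]; ring
    have houter := (Finset.sum_eq_zero_iff_of_nonneg (by
      intro a ha
      exact Finset.sum_nonneg (fun l hl => by
        have := hterm a ha l hl; linarith))).1 hsum
    intro a ha l hl
    have hinner := (Finset.sum_eq_zero_iff_of_nonneg (by
      intro l hl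
      have := hterm a ha l hl; linarith)).1 (houter a ha)
    exact hinner l hl
  -- hence K a = l.card whenever a ∉ l
  have keyEq : ∀ a ∈ P, ∀ l ∈ L, a ∉ l → K a = l.card := by
    intro a ha l hl hal
    have hz := hzero a ha l (Finset.mem_filter.2 ⟨hl, hal⟩)
    have hK' := hKlt a ha
    have hl' := hllt l hl
    have hdK : (0:ℚ) < (n:ℚ) * ((n:ℚ) - (K a : ℚ)) := by
      have : (K a : ℚ) + 1 ≤ (n:ℚ) := by exact_mod_cast hK'
      nlinarith
    have hdl : (0:ℚ) < (n:ℚ) * ((n:ℚ) - (l.card : ℚ)) := by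
      have : (l.card : ℚ) + 1 ≤ (n:ℚ) := by exact_mod_cast hl'
      nlinarith
    have : ((K a : ℚ)) = (l.card : ℚ) := by
      rw [sub_eq_zero] at hz
      have h9 := (div_eq_div_iff hdK.ne' hdl.ne').1 hz
      have h10 : (n:ℚ) * ((n:ℚ) - (l.card:ℚ)) = (n:ℚ) * ((n:ℚ) - (K a:ℚ)) := by linarith
      have h11 := mul_left_cancel₀ hn0.ne' h10
      linarith
    exact_mod_cast this
  -- final contradiction: take a point on l1; it misses l2
  obtain ⟨a, ha1⟩ : l1.Nonempty := Finset.card_pos.1 (by have := hcard l1 hl1; omega)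
  have haP : a ∈ P := hsub l1 hl1 ha1
  have hal2 : a ∉ l2 := by
    intro h
    have : a ∈ l1 ∩ l2 := Finset.mem_inter.2 ⟨ha1, h⟩
    rw [hdis] at this
    exact absurd this (Finset.notMem_empty a)
  have hEq := keyEq a haP l2 hl2 hal2
  -- strict: l2.card < K a
  have hstrict : l2.card < K a := by
    have hsub' : (L.filter fun m => a ∈ m ∧ (m ∩ l2).Nonempty) ⊆ (L.filter fun m => a ∈ m).erase l1 := by
      intro m hmm
      simp only [Finset.mem_filter] at hmm
      rw [Finset.mem_erase]
      refine ⟨?_, Finset.mem_filter.2 ⟨hmm.1, hmm.2.1⟩⟩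
      intro h
      rw [h, hdis] at hmm
      exact hmm.2.2.ne_empty rfl
    have h3 := le_trans (line_inj hsub hpair haP hl2 hal2) (Finset.card_le_card hsub')
    have h4 : l1 ∈ L.filter fun m => a ∈ m := Finset.mem_filter.2 ⟨hl1, ha1⟩
    rw [Finset.card_erase_of_mem h4] at h3
    have h5 : 1 ≤ (L.filter fun m => a ∈ m).card := Finset.card_pos.2 ⟨l1, h4⟩
    show l2.card < (L.filter fun m => a ∈ m).card
    omega
  exact absurd hEq (ne_of_gt hstrict)
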